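/- Let β₁,…,βₙ ∈ 𝓡ⁿ, written βᵢ = (bᵢ + i·cᵢ, vᵢ) ∈ ℂⁿ×ℤⁿ. If {bᵢ} is a basis of ℝⁿ and {vᵢ} is a basis of the ℤ-module ℤⁿ, then there exist α₁,…,αₙ ∈ 𝓡ⁿ with ⟨αᵢ, βⱼ⟩ = δᵢⱼ·1 in 𝓡 for all i, j. -/

import Mathlib

noncomputable section

open Complex Finset

/-- `g^μ` for `μ = (b + c·i, v) ∈ ℂ × ℤ`: `|g|^(b+ci) · (g/|g|)^v`. -/
noncomputable def cpw (b c : ℝ) (v : ℤ) (g : ℂ) : ℂ :=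
  ((‖g‖ : ℂ) ^ ((b : ℂ) + (c : ℂ) * Complex.I)) * (g / (‖g‖ : ℂ)) ^ v

/-- `g^μ` where `μ` is encoded as a triple `(b, c, v) : ℝ × ℝ × ℤ`. -/
noncomputable def cpwT (t : ℝ × ℝ × ℤ) (g : ℂ) : ℂ := cpw t.1 t.2.1 t.2.2 g

/-- The product `μ₂μ₁ = (b₁b₂, b₁c₂ + c₁v₂, v₁v₂)` in the ring `𝓡 ≅ ℂ × ℤ`. -/
def rmul (μ₂ μ₁ : ℝ × ℝ × ℤ) : ℝ × ℝ × ℤ :=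
  (μ₁.1 * μ₂.1, μ₁.1 * μ₂.2.1 + μ₁.2.1 * (μ₂.2.2 : ℝ), μ₁.2.2 * μ₂.2.2)

/-- The identity element of `𝓡`. -/
def rone : ℝ × ℝ × ℤ := (1, 0, 1)

/-- `⟨α, β⟩ = Σₖ αᵏ βᵏ ∈ 𝓡`. -/
def rinner {n : ℕ} (α β : Fin n → ℝ × ℝ × ℤ) : ℝ × ℝ × ℤ :=
  ∑ k, rmul (α k) (β k)

/-- `χ^α(g₁, …, gₙ) = ∏ₖ gₖ^{αᵏ}`. -/
noncomputable def chi {n : ℕ} (α : Fin n → ℝ × ℝ × ℤ) (g : Fin n → ℂ) : ℂ :=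
  ∏ k, cpwT (α k) (g k)

open Matrix

/-- if `β₁,…,βₙ ∈ 𝓡ⁿ` with `βᵢ = (bᵢ + i·cᵢ, vᵢ)` are such that `{bᵢ}` is a
basis of `ℝⁿ` (nonzero determinant) and `{vᵢ}` is a `ℤ`-basis of `ℤⁿ` (determinant a unit),
then `{βᵢ}` admits a dual set `{αᵢ}`: `⟨αᵢ,βⱼ⟩ = δᵢⱼ·1`. -/
theorem exists_dual_set (n : ℕ) (β : Fin n → Fin n → ℝ × ℝ × ℤ)
    (hb : (Matrix.of fun i k => (β i k).1).det ≠ 0)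
    (hv : IsUnit (Matrix.of fun i k => (β i k).2.2).det) :
    ∃ α : Fin n → Fin n → ℝ × ℝ × ℤ,
      ∀ i j, rinner (α i) (β j) = if i = j then rone else 0 := by
  set B : Matrix (Fin n) (Fin n) ℝ := Matrix.of fun i k => (β i k).1 with hBdef
  set C : Matrix (Fin n) (Fin n) ℝ := Matrix.of fun i k => (β i k).2.1 with hCdef
  set V : Matrix (Fin n) (Fin n) ℤ := Matrix.of fun i k => (β i k).2.2 with hVdef
  set B' : Matrix (Fin n) (Fin n) ℝ := (Bᵀ)⁻¹ with hB'def
  set V' : Matrix (Fin n) (Fin n) ℤ := (Vᵀ)⁻¹ with hV'def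
  set C' : Matrix (Fin n) (Fin n) ℝ := -((V'.map (Int.cast : ℤ → ℝ)) * Cᵀ * B') with hC'def
  have hBu : IsUnit (Bᵀ).det := by
    rw [Matrix.det_transpose]; exact isUnit_iff_ne_zero.mpr hb
  have hVu : IsUnit (Vᵀ).det := by rw [Matrix.det_transpose]; exact hv
  have hB : B' * Bᵀ = 1 := Matrix.nonsing_inv_mul _ hBu
  have hBr : Bᵀ * B' = 1 := Matrix.mul_nonsing_inv _ hBu
  have hV : V' * Vᵀ = 1 := Matrix.nonsing_inv_mul _ hVu
  have hC : C' * Bᵀ + (V'.map (Int.cast : ℤ → ℝ)) * Cᵀ = 0 := by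
    rw [hC'def, neg_mul, Matrix.mul_assoc, hB, Matrix.mul_one]
    exact neg_add_cancel _
  refine ⟨fun i k => (B' i k, C' i k, V' i k), fun i j => ?_⟩
  have h1 : (rinner (fun k => (B' i k, C' i k, V' i k)) (β j)).1 = (B' * Bᵀ) i j := by
    simp only [rinner, Prod.fst_sum, rmul, Matrix.mul_apply, Matrix.transpose_apply]
    exact Finset.sum_congr rfl fun k _ => by
      show (β j k).1 * B' i k = B' i k * B j k
      rw [mul_comm]; rfl
  have h2 : (rinner (fun k => (B' i k, C' i k, V' i k)) (β j)).2.1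
      = (C' * Bᵀ + (V'.map (Int.cast : ℤ → ℝ)) * Cᵀ) i j := by
    simp only [rinner, Prod.snd_sum, Prod.fst_sum, rmul, Matrix.add_apply, Matrix.mul_apply,
      Matrix.transpose_apply, Matrix.map_apply, ← Finset.sum_add_distrib]
    exact Finset.sum_congr rfl fun k _ => by
      show (β j k).1 * C' i k + (β j k).2.1 * ((V' i k : ℤ) : ℝ)
        = C' i k * B j k + ((V' i k : ℤ) : ℝ) * C j k
      rw [mul_comm ((β j k).1), mul_comm ((β j k).2.1)]; rfl
  have h3 : (rinner (fun k => (B' i k, C' i k, V' i k)) (β j)).2.2 = (V' * Vᵀ) i j := by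
    simp only [rinner, Prod.snd_sum, rmul, Matrix.mul_apply, Matrix.transpose_apply]
    exact Finset.sum_congr rfl fun k _ => by
      show (β j k).2.2 * V' i k = V' i k * V j k
      rw [mul_comm]; rfl
  have := h1; rw [hB] at h1
  rw [hC] at h2
  rw [hV] at h3
  apply Prod.ext
  · rw [h1, Matrix.one_apply]
    by_cases h : i = j <;> simp [h, rone]
  · apply Prod.ext
    · rw [h2]
      by_cases h : i = j <;> simp [h, rone, Matrix.zero_apply]
    · rw [h3, Matrix.one_apply]
      by_cases h : i = j <;> simp [h, rone]
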